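/- If a density operator ρ on H_{AB} ⊗ H_C is separable across the cut AB|C, then there exists a finite set of product vectors {ψᵢ ⊗ φᵢ} (ψᵢ ∈ H_{AB}, φᵢ ∈ H_C) spanning the range of ρ such that the partially conjugated vectors {ψᵢ ⊗ φᵢ*} span the range of ρ^{T_C} (the range criterion). -/
import Mathlib


noncomputable section

open scoped BigOperators ComplexOrder

/-- tensor product of a vector on H_AB and a vector on H_C -/
def tens {m d : ℕ} (ψ : Fin m → ℂ) (φ : Fin d → ℂ) : Fin m × Fin d → ℂ :=
  fun x => ψ x.1 * φ x.2

/-- standard inner product -/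
def ip {n : Type*} [Fintype n] (x y : n → ℂ) : ℂ := ∑ i, star (x i) * y i

/-- partial transpose with respect to the second factor (subsystem C) -/
def ptC {m d : ℕ} (ρ : Matrix (Fin m × Fin d) (Fin m × Fin d) ℂ) :
    Matrix (Fin m × Fin d) (Fin m × Fin d) ℂ :=
  Matrix.of fun x y => ρ (x.1, y.2) (y.1, x.2)

set_option linter.unusedSectionVars false

variable {K : Type*} [Fintype K] [DecidableEq K] {n : ℕ}

lemma ip_self_eq_zero {x : K → ℂ} (h : ip x x = 0) : x = 0 := by
  have h2 : ∑ i, (Complex.normSq (x i) : ℂ) = 0 := by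
    rw [← h]; unfold ip
    exact Finset.sum_congr rfl fun i _ => by
      rw [Complex.star_def, ← Complex.normSq_eq_conj_mul_self]
  have h3 : ∑ i, Complex.normSq (x i) = 0 := by
    exact_mod_cast (by push_cast at h2 ⊢; exact_mod_cast h2 : ((∑ i, Complex.normSq (x i) : ℝ) : ℂ) = 0)
  funext i
  have := (Finset.sum_eq_zero_iff_of_nonneg (fun i _ => Complex.normSq_nonneg (x i))).1 h3 i (Finset.mem_univ i)
  simpa using Complex.normSq_eq_zero.1 this

lemma ip_add (x y z : K → ℂ) : ip x (y + z) = ip x y + ip x z := by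
  simp [ip, mul_add, Finset.sum_add_distrib]

lemma ip_smul (c : ℂ) (x y : K → ℂ) : ip x (c • y) = c * ip x y := by
  simp only [ip, Pi.smul_apply, smul_eq_mul, Finset.mul_sum]
  exact Finset.sum_congr rfl fun k _ => by ring

lemma ip_star (x y : K → ℂ) : ip x y = star (ip y x) := by
  unfold ip
  rw [star_sum]
  exact Finset.sum_congr rfl fun k _ => by simp [mul_comm]

lemma ip_sum {ι : Type*} (s : Finset ι) (x : K → ℂ) (f : ι → K → ℂ) :
    ip x (∑ i ∈ s, f i) = ∑ i ∈ s, ip x (f i) := by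
  unfold ip
  simp only [Finset.sum_apply, Finset.mul_sum]
  exact Finset.sum_comm

lemma mulVec_sum_eq (p : Fin n → ℝ) (v : Fin n → K → ℂ) (x : K → ℂ) :
    (∑ i, (p i : ℂ) • Matrix.vecMulVec (v i) (star (v i))).mulVec x
      = ∑ i, ((p i : ℂ) * ip (v i) x) • v i := by
  funext j
  simp only [Matrix.mulVec, dotProduct, Matrix.sum_apply, Matrix.smul_apply,
    Matrix.vecMulVec_apply, Pi.star_apply, Finset.sum_apply, Pi.smul_apply, ip,
    smul_eq_mul, Finset.sum_mul, Finset.mul_sum]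
  rw [Finset.sum_comm]
  exact Finset.sum_congr rfl fun i _ => Finset.sum_congr rfl fun k _ => by ring

lemma range_eq_span (p : Fin n → ℝ) (hp : ∀ i, 0 < p i) (v : Fin n → K → ℂ) :
    LinearMap.range (∑ i, (p i : ℂ) • Matrix.vecMulVec (v i) (star (v i))).mulVecLin
      = Submodule.span ℂ (Set.range v) := by
  set M := ∑ i, (p i : ℂ) • Matrix.vecMulVec (v i) (star (v i)) with hM
  set V := Submodule.span ℂ (Set.range v) with hV
  have hmem : ∀ x, M.mulVecLin x ∈ V := by
    intro x
    rw [Matrix.mulVecLin_apply, hM, mulVec_sum_eq]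
    exact Submodule.sum_mem _ fun i _ =>
      Submodule.smul_mem _ _ (Submodule.subset_span ⟨i, rfl⟩)
  have hker : ∀ x, M.mulVecLin x = 0 → x ∈ V → x = 0 := by
    intro x hx hxV
    have horth : ∀ i, ip (v i) x = 0 := by
      have h0 : ip x (M.mulVec x) = 0 := by
        rw [show M.mulVec x = 0 from hx]; simp [ip]
      rw [hM, mulVec_sum_eq] at h0
      have h1 : ip x (∑ i, ((p i : ℂ) * ip (v i) x) • v i)
          = ∑ i, (p i : ℂ) * Complex.normSq (ip (v i) x) := by
        rw [ip_sum]
        refine Finset.sum_congr rfl fun i _ => ?_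
        rw [ip_smul, ip_star x (v i), mul_assoc, Complex.star_def, Complex.mul_conj]
      rw [h1] at h0
      have h0' : ∑ i, p i * Complex.normSq (ip (v i) x) = 0 := by
        exact_mod_cast (by push_cast at h0 ⊢; exact_mod_cast h0 :
          ((∑ i, p i * Complex.normSq (ip (v i) x) : ℝ) : ℂ) = 0)
      intro i
      have hterm := (Finset.sum_eq_zero_iff_of_nonneg (fun i _ =>
        mul_nonneg (hp i).le (Complex.normSq_nonneg _))).1 h0' i (Finset.mem_univ i)
      have := (mul_eq_zero.1 hterm).resolve_left (ne_of_gt (hp i))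
      exact Complex.normSq_eq_zero.1 this
    have hlin : ∀ y ∈ V, ip x y = 0 := by
      intro y hy
      induction hy using Submodule.span_induction with
      | mem y hy =>
        obtain ⟨i, rfl⟩ := hy
        rw [ip_star, horth i, star_zero]
      | zero => simp [ip]
      | add y z _ _ hy hz => rw [ip_add, hy, hz, add_zero]
      | smul c y _ hy => rw [ip_smul, hy, mul_zero]
    exact ip_self_eq_zero (hlin x hxV)
  apply le_antisymm
  · rintro y ⟨x, rfl⟩; exact hmem x
  · let g : V →ₗ[ℂ] V := (M.mulVecLin).restrict (fun x _ => hmem x)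
    have hginj : Function.Injective g := by
      rw [← LinearMap.ker_eq_bot, LinearMap.ker_eq_bot']
      rintro ⟨x, hxV⟩ hgx
      have : M.mulVecLin x = 0 := congrArg Subtype.val hgx
      exact Subtype.ext (hker x this hxV)
    have hgsurj : Function.Surjective g :=
      (LinearMap.injective_iff_surjective).1 hginj
    intro y hy
    obtain ⟨⟨x, hxV⟩, hx⟩ := hgsurj ⟨y, hy⟩
    exact ⟨x, congrArg Subtype.val hx⟩

/-- the range criterion for states separable across the cut AB|C -/
theorem range_criterion {m d : ℕ} (ρ : Matrix (Fin m × Fin d) (Fin m × Fin d) ℂ)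
    (hsep : ∃ (n : ℕ) (p : Fin n → ℝ) (ψ : Fin n → Fin m → ℂ) (φ : Fin n → Fin d → ℂ),
      (∀ i, 0 < p i) ∧ (∑ i, p i) = 1 ∧
      (∀ i, ip (ψ i) (ψ i) = 1) ∧ (∀ i, ip (φ i) (φ i) = 1) ∧
      ρ = ∑ i, (p i : ℂ) •
        Matrix.vecMulVec (tens (ψ i) (φ i)) (star (tens (ψ i) (φ i)))) :
    ∃ (n : ℕ) (ψ : Fin n → Fin m → ℂ) (φ : Fin n → Fin d → ℂ),
      Submodule.span ℂ (Set.range fun i => tens (ψ i) (φ i)) =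
        LinearMap.range ρ.mulVecLin ∧
      Submodule.span ℂ (Set.range fun i => tens (ψ i) (fun k => star (φ i k))) =
        LinearMap.range (ptC ρ).mulVecLin := by
  obtain ⟨n, p, ψ, φ, hp, hsum, hψ, hφ, hρ⟩ := hsep
  refine ⟨n, ψ, φ, ?_, ?_⟩
  · rw [hρ, range_eq_span p hp]
  · have hpt : ptC ρ = ∑ i, (p i : ℂ) •
        Matrix.vecMulVec (tens (ψ i) (fun k => star (φ i k)))
          (star (tens (ψ i) (fun k => star (φ i k)))) := by
      rw [hρ]
      ext a b
      simp only [ptC, Matrix.of_apply, Matrix.sum_apply, Matrix.smul_apply,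
        Matrix.vecMulVec_apply, Pi.star_apply, smul_eq_mul, tens]
      exact Finset.sum_congr rfl fun i _ => by
        simp only [star_mul', star_star]; ring
    rw [hpt, range_eq_span p hp]
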